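/- Let F(t) = t log(√(t/(2π))/n) - t/2 - π/8, c = 2πn², and consider z = c + v·e^{iπ/4} for real v with |v| ≤ V where V ≤ c/2. Then Re(iF(z)) = -v²F''(c)/2 + O(|v|³/c²) = -v²/(8πn²) + O(|v|³/c²); in particular, along the direction e^{iπ/4} through the saddle point, |e^{iF(z)}| decays like a Gaussian in v. -/

import Mathlib

open Complex Real

lemma log_div_real {a : ℂ} (ha : a ≠ 0) {r : ℝ} (hr : 0 < r) :
    Complex.log (a / r) = Complex.log a - Real.log r := by
  have : a / r = ((r⁻¹ : ℝ) : ℂ) * a := by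
    push_cast; field_simp
  rw [this, Complex.log_ofReal_mul (inv_pos.2 hr) ha, Real.log_inv]
  push_cast; ring

lemma aux_cube {w : ℂ} (hw : ‖w‖ ≤ 1/2) :
    ‖(1 + w) * Complex.log (1 + w) - w - w ^ 2 / 2‖ ≤ 3/2 * ‖w‖ ^ 3 := by
  have hw1 : ‖w‖ < 1 := lt_of_le_of_lt hw (by norm_num)
  have hT := Complex.norm_log_sub_logTaylor_le 2 hw1
  have hTay : Complex.logTaylor 3 w = w - w ^ 2 / 2 := by
    simp [Complex.logTaylor_succ, Complex.logTaylor_zero]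
    ring
  rw [hTay] at hT
  set R := Complex.log (1 + w) - (w - w ^ 2 / 2) with hR
  have hid : (1 + w) * Complex.log (1 + w) - w - w ^ 2 / 2 = (1 + w) * R - w ^ 3 / 2 := by
    rw [hR]; ring
  have hnn := norm_nonneg w
  have hRB : ‖R‖ ≤ 2/3 * ‖w‖ ^ 3 := by
    refine hT.trans ?_
    have h2 : (1 - ‖w‖)⁻¹ ≤ 2 := by
      rw [inv_le_comm₀ (by linarith) (by norm_num)]
      linarith
    have : ‖w‖ ^ 3 * (1 - ‖w‖)⁻¹ ≤ ‖w‖ ^ 3 * 2 :=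
      mul_le_mul_of_nonneg_left h2 (by positivity)
    push_cast
    linarith
  have h1w : ‖(1 : ℂ) + w‖ ≤ 3/2 := by
    calc ‖(1 : ℂ) + w‖ ≤ ‖(1 : ℂ)‖ + ‖w‖ := norm_add_le _ _
    _ ≤ 3/2 := by rw [norm_one]; linarith
  rw [hid]
  calc ‖(1 + w) * R - w ^ 3 / 2‖ ≤ ‖(1 + w) * R‖ + ‖w ^ 3 / 2‖ := norm_sub_le _ _
    _ = ‖(1 : ℂ) + w‖ * ‖R‖ + ‖w‖ ^ 3 / 2 := by
        rw [norm_mul]; congr 1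
        simp [norm_div, norm_pow]
    _ ≤ 3/2 * (2/3 * ‖w‖ ^ 3) + ‖w‖ ^ 3 / 2 := by
        gcongr
    _ ≤ 3/2 * ‖w‖ ^ 3 := by nlinarith

lemma key_mul (c v : ℝ) (w e L : ℂ) (hcw : (c : ℂ) * w = v * e)
    (he2 : e ^ 2 = Complex.I) :
    Complex.I * ((c : ℂ) * (1 + w) * (L / 2) - (c : ℂ) * (1 + w) / 2 - (π : ℂ) / 8) *
        (4 * (c : ℂ)) =
      Complex.I * ((1 + w) * L - w - w ^ 2 / 2) * (2 * (c : ℂ) ^ 2) +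
        Complex.I * (-((c : ℂ) ^ 2 * 2) - (π : ℂ) * (c : ℂ) / 2) - (v : ℂ) ^ 2 := by
  linear_combination (Complex.I * (v : ℂ) ^ 2) * he2 +
    (Complex.I * ((c : ℂ) * w + (v : ℂ) * e)) * hcw + (v : ℂ) ^ 2 * Complex.I_sq

/-- The complex extension of the phase `F(z) = z log(√(z/(2π))/n) - z/2 - π/8`. -/
noncomputable def phaseFC (n : ℕ) (z : ℂ) : ℂ :=
  z * Complex.log ((z / (2 * π)) ^ (1 / 2 : ℂ) / n) - z / 2 - π / 8

set_option maxHeartbeats 1000000 in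
/-- Steepest descent: along the direction `e^{iπ/4}` through the saddle point
`c = 2πn²`, `Re(iF(c + ve^{iπ/4})) = -v²/(8πn²) + O(|v|³/c²)`. -/
theorem steepest_descent_expansion :
    ∃ C : ℝ, 0 < C ∧ ∀ n : ℕ, 1 ≤ n → ∀ v : ℝ,
      |v| ≤ 2 * π * n ^ 2 / 2 →
      |(Complex.I * phaseFC n ((2 * π * n ^ 2 : ℝ) + v * Complex.exp (Complex.I * π / 4))).re +
          v ^ 2 / (8 * π * n ^ 2)| ≤
        C * |v| ^ 3 / (2 * π * n ^ 2) ^ 2 := by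
  refine ⟨1, one_pos, ?_⟩
  intro n hn v hv
  set c : ℝ := 2 * π * (n : ℝ) ^ 2 with hc
  have hπ := Real.pi_pos
  have hn1 : (1 : ℝ) ≤ (n : ℝ) := by exact_mod_cast hn
  have hcpos : 0 < c := by positivity
  have hcne : (c : ℂ) ≠ 0 := by exact_mod_cast hcpos.ne'
  set e : ℂ := Complex.exp (Complex.I * π / 4) with he
  set z : ℂ := (c : ℝ) + v * e with hz
  set w : ℂ := v * e / c with hw
  have hcw : (c : ℂ) * w = v * e := by rw [hw]; field_simp
  have hzw : z = c * (1 + w) := by rw [hz, mul_add, hcw, mul_one]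
  have henorm : ‖e‖ = 1 := by
    rw [he, Complex.norm_exp]
    norm_num
  have hwnorm : ‖w‖ = |v| / c := by
    rw [hw]
    simp [norm_div, norm_mul, henorm, Complex.norm_real, Real.norm_eq_abs,
      abs_of_pos hcpos]
  have hwhalf : ‖w‖ ≤ 1 / 2 := by
    rw [hwnorm, div_le_div_iff₀ hcpos (by norm_num)]
    linarith [hv]
  have hwre : |w.re| ≤ 1 / 2 := le_trans (Complex.abs_re_le_norm w) hwhalf
  -- z has positive real part
  have hzre : 0 < z.re := by
    rw [hzw]
    have : ((c : ℂ) * (1 + w)).re = c * (1 + w.re) := by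
      simp [Complex.re_ofReal_mul]
    rw [this]
    have : (1 : ℝ) + w.re ≥ 1/2 := by
      cases' abs_le.1 hwre with h1 h2; linarith
    nlinarith
  have hzne : z ≠ 0 := by
    intro h; rw [h] at hzre; simp at hzre
  -- the log identity
  have hune : z / (2 * (π : ℂ)) ≠ 0 := by
    apply div_ne_zero hzne
    simp [Real.pi_ne_zero]
  have hnpos : (0 : ℝ) < (n : ℝ) := by linarith
  have h1wz : (1 : ℂ) + w = z / c := by
    rw [hzw]; field_simp
  have hzc : z / (c : ℂ) = z / (2 * (π : ℂ)) / ((n : ℝ) ^ 2 : ℝ) := by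
    rw [hc]; push_cast; field_simp
  have hlog2 : Complex.log (1 + w) =
      Complex.log (z / (2 * π)) - 2 * Real.log n := by
    rw [h1wz, hzc, log_div_real hune (by positivity)]
    rw [show ((n : ℝ) ^ 2) = (n : ℝ) ^ (2 : ℕ) by norm_num, Real.log_pow]
    push_cast; ring
  have hargu₁ := Complex.neg_pi_lt_arg (z / (2 * π))
  have hargu₂ := Complex.arg_le_pi (z / (2 * π))
  have hcpow : (z / (2 * π)) ^ (1 / 2 : ℂ) =
      Complex.exp (Complex.log (z / (2 * π)) * (1 / 2)) := by
    rw [Complex.cpow_def_of_ne_zero hune]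
  have hlogexp : Complex.log ((z / (2 * π)) ^ (1 / 2 : ℂ)) =
      Complex.log (z / (2 * π)) * (1 / 2) := by
    rw [hcpow, Complex.log_exp]
    · simp only [Complex.mul_im, Complex.log_im]
      norm_num
      nlinarith [Complex.arg_le_pi (z / (2 * (π : ℂ))), hπ,
        Complex.neg_pi_lt_arg (z / (2 * (π : ℂ)))]
    · simp only [Complex.mul_im, Complex.log_im]
      norm_num
      nlinarith [Complex.arg_le_pi (z / (2 * (π : ℂ))), hπ,
        Complex.neg_pi_lt_arg (z / (2 * (π : ℂ)))]
  have hpowne : (z / (2 * π)) ^ (1 / 2 : ℂ) ≠ 0 := by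
    rw [hcpow]; exact Complex.exp_ne_zero _
  have hlog1 : Complex.log ((z / (2 * π)) ^ (1 / 2 : ℂ) / (n : ℂ)) =
      Complex.log (1 + w) / 2 := by
    have hn' : (n : ℂ) = ((n : ℝ) : ℂ) := by push_cast; rfl
    rw [hn', log_div_real hpowne hnpos, hlogexp, hlog2]
    ring
  -- e^2 = I
  have he2 : e ^ 2 = Complex.I := by
    rw [he, ← Complex.exp_nat_mul]
    have h24 : ((2 : ℕ) : ℂ) * (Complex.I * π / 4) = (π : ℂ) / 2 * Complex.I := by
      push_cast; ring
    rw [h24, Complex.exp_mul_I, Complex.cos_pi_div_two, Complex.sin_pi_div_two]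
    simp
  set L : ℂ := Complex.log (1 + w) with hL
  set G : ℂ := (1 + w) * L - w - w ^ 2 / 2 with hG
  have key := key_mul c v w e L hcw he2
  rw [← hzw, ← hG] at key
  set D : ℂ := Complex.I * (z * (L / 2) - z / 2 - (π : ℂ) / 8) with hD
  clear_value D G L w e z c
  have hre := congrArg Complex.re key
  have h1 : (D * (4 * (c : ℂ))).re = D.re * (4 * c) := by
    rw [show (4 : ℂ) * (c : ℂ) = ((4 * c : ℝ) : ℂ) by push_cast; ring,
      mul_comm D, Complex.re_ofReal_mul]
    ring
  have h2 : (Complex.I * G * (2 * (c : ℂ) ^ 2) +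
      Complex.I * (-((c : ℂ) ^ 2 * 2) - (π : ℂ) * (c : ℂ) / 2) - (v : ℂ) ^ 2).re =
      -(2 * c ^ 2) * G.im - v ^ 2 := by
    simp [Complex.mul_re, Complex.mul_im, Complex.add_re, Complex.sub_re, Complex.sub_im,
      Complex.add_im, Complex.I_re, Complex.I_im, Complex.ofReal_re, Complex.ofReal_im,
      ← Complex.ofReal_pow]
    ring
  rw [h1, h2] at hre
  have hXre : D.re = -(c / 2) * G.im - v ^ 2 / (4 * c) := by
    have h4 : (4 : ℝ) * c ≠ 0 := by positivity
    field_simp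
    linarith [hre]
  -- finish
  have hGb := aux_cube hwhalf
  rw [← hL, ← hG] at hGb
  have hphase : phaseFC n z = z * (L / 2) - z / 2 - (π : ℂ) / 8 := by
    unfold phaseFC
    rw [hlog1]
  have h8 : 8 * π * (n : ℝ) ^ 2 = 4 * c := by rw [hc]; ring
  rw [hphase, ← hD, h8, hXre]
  have habs : |(-(c / 2) * G.im - v ^ 2 / (4 * c)) + v ^ 2 / (4 * c)| = c / 2 * |G.im| := by
    rw [show (-(c / 2) * G.im - v ^ 2 / (4 * c)) + v ^ 2 / (4 * c) = -(c / 2 * G.im) by ring,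
      abs_neg, abs_mul, abs_of_pos (show (0 : ℝ) < c / 2 by positivity)]
  rw [habs]
  have hub : c / 2 * |G.im| ≤ c / 2 * (3 / 2 * ‖w‖ ^ 3) := by
    have him : |G.im| ≤ ‖G‖ := Complex.abs_im_le_norm G
    have := le_trans him hGb
    nlinarith [abs_nonneg G.im]
  refine hub.trans ?_
  rw [hwnorm]
  have heq : c / 2 * (3 / 2 * (|v| / c) ^ 3) = 3 / 4 * |v| ^ 3 / c ^ 2 := by
    field_simp
    ring
  rw [heq]
  gcongr
  norm_num
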